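/- arXiv:1012.2630 — 2 statements merged into one kernel-verified Lean document; each statement's English description precedes it below -/
import Mathlib

section
/- For the four-qubit GHZ state u = [1,1,1,1] + [2,2,2,2], one has ñ₁₉(u) = 6; and for the cluster-type state u' = [1,1,1,1] + [1,1,2,2] + [1,2,1,1] + [1,2,1,2] + [2,1,1,1] + [2,1,2,1] + [2,2,2,2] (the representative of class C₈₂), one has ñ₁₉(u') = 3. -/
/-- Solution space of the four simultaneous contraction conditions defining
the intersection invariant `ñ₁₉` of four qubits. -/
def S₁₉ (v : Fin 2 → Fin 2 → Fin 2 → Fin 2 → ℝ) :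
    Submodule ℝ (Fin 2 → Fin 2 → Fin 2 → Fin 2 → ℝ) where
  carrier := { w |
    (∀ j₁ k₁, ∑ j₂, ∑ j₃, ∑ j₄, v j₁ j₂ j₃ j₄ * w k₁ j₂ j₃ j₄ = 0) ∧
    (∀ j₂ k₂, ∑ j₁, ∑ j₃, ∑ j₄, v j₁ j₂ j₃ j₄ * w j₁ k₂ j₃ j₄ = 0) ∧
    (∀ j₃ k₃, ∑ j₁, ∑ j₂, ∑ j₄, v j₁ j₂ j₃ j₄ * w j₁ j₂ k₃ j₄ = 0) ∧
    (∀ j₄ k₄, ∑ j₁, ∑ j₂, ∑ j₃, v j₁ j₂ j₃ j₄ * w j₁ j₂ j₃ k₄ = 0) }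
  zero_mem' := by
    refine ⟨?_, ?_, ?_, ?_⟩ <;> intro a b <;> simp
  add_mem' := by
    rintro a b ⟨ha1, ha2, ha3, ha4⟩ ⟨hb1, hb2, hb3, hb4⟩
    refine ⟨fun p q => ?_, fun p q => ?_, fun p q => ?_, fun p q => ?_⟩ <;>
      simp only [Pi.add_apply, mul_add, Finset.sum_add_distrib]
    · rw [ha1 p q, hb1 p q, add_zero]
    · rw [ha2 p q, hb2 p q, add_zero]
    · rw [ha3 p q, hb3 p q, add_zero]
    · rw [ha4 p q, hb4 p q, add_zero]
  smul_mem' := by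
    rintro c a ⟨ha1, ha2, ha3, ha4⟩
    have hc : ∀ x y : ℝ, x * (c * y) = c * (x * y) := fun x y => mul_left_comm x c y
    refine ⟨fun p q => ?_, fun p q => ?_, fun p q => ?_, fun p q => ?_⟩ <;>
      simp only [Pi.smul_apply, smul_eq_mul, hc, ← Finset.mul_sum]
    · rw [ha1 p q, mul_zero]
    · rw [ha2 p q, mul_zero]
    · rw [ha3 p q, mul_zero]
    · rw [ha4 p q, mul_zero]

/-- `ñ₁₉(v)`: the dimension of `S₁₉ v`. -/
noncomputable def n₁₉ (v : Fin 2 → Fin 2 → Fin 2 → Fin 2 → ℝ) : ℕ :=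
  Module.finrank ℝ (S₁₉ v)

/-- The basis array `[a,b,c,d]`: equal to `1` at index `(a,b,c,d)` and `0`
elsewhere.  The paper's indices `1, 2` correspond to `0, 1 : Fin 2`. -/
def e (a b c d : Fin 2) : Fin 2 → Fin 2 → Fin 2 → Fin 2 → ℝ :=
  fun i j k l => if i = a ∧ j = b ∧ k = c ∧ l = d then 1 else 0

@[simp]
lemma cons_val_five' {α : Type*} {m : ℕ} (x : α) (u : Fin (m+5) → α) :
    Matrix.vecCons x u 5 =
      Matrix.vecHead (Matrix.vecTail (Matrix.vecTail (Matrix.vecTail (Matrix.vecTail u)))) :=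
  rfl

def bG : Fin 6 → (Fin 2 → Fin 2 → Fin 2 → Fin 2 → ℝ) :=
  ![e 0 0 1 1, e 0 1 0 1, e 0 1 1 0, e 1 0 0 1, e 1 0 1 0, e 1 1 0 0]

set_option maxHeartbeats 2000000 in
lemma spanG : S₁₉ (e 0 0 0 0 + e 1 1 1 1) = Submodule.span ℝ (Set.range bG) := by
  apply le_antisymm
  · intro w hw
    obtain ⟨h1, h2, h3, h4⟩ := hw
    have q100 := h1 0 0
    have q101 := h1 0 1
    have q110 := h1 1 0
    have q111 := h1 1 1
    have q200 := h2 0 0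
    have q201 := h2 0 1
    have q210 := h2 1 0
    have q211 := h2 1 1
    have q300 := h3 0 0
    have q301 := h3 0 1
    have q310 := h3 1 0
    have q311 := h3 1 1
    have q400 := h4 0 0
    have q401 := h4 0 1
    have q410 := h4 1 0
    have q411 := h4 1 1
    simp only [e, Pi.add_apply, Fin.sum_univ_two] at q100 q101 q110 q111 q200 q201 q210 q211 q300 q301 q310 q311 q400 q401 q410 q411
    norm_num at q100 q101 q110 q111 q200 q201 q210 q211 q300 q301 q310 q311 q400 q401 q410 q411
    rw [Submodule.mem_span_range_iff_exists_fun]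
    refine ⟨![w 0 0 1 1, w 0 1 0 1, w 0 1 1 0, w 1 0 0 1, w 1 0 1 0, w 1 1 0 0], ?_⟩
    funext i₁ i₂ i₃ i₄
    fin_cases i₁ <;> fin_cases i₂ <;> fin_cases i₃ <;> fin_cases i₄ <;>
      simp [bG, e, Fin.sum_univ_six, Matrix.vecHead, Matrix.vecTail] <;>
      linarith [q100, q101, q110, q111, q200, q201, q210, q211, q300, q301, q310, q311, q400, q401, q410, q411]
  · rw [Submodule.span_le]
    rintro x ⟨i, rfl⟩
    fin_cases i <;> refine ⟨?_, ?_, ?_, ?_⟩ <;> intro j k <;> fin_cases j <;> fin_cases k <;>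
      norm_num [bG, e, Fin.sum_univ_two]

set_option maxHeartbeats 2000000 in
lemma indepG : LinearIndependent ℝ bG := by
  rw [Fintype.linearIndependent_iff]
  intro g hg
  have hv0 := congrFun (congrFun (congrFun (congrFun hg 0) 0) 1) 1
  have hv1 := congrFun (congrFun (congrFun (congrFun hg 0) 1) 0) 1
  have hv2 := congrFun (congrFun (congrFun (congrFun hg 0) 1) 1) 0
  have hv3 := congrFun (congrFun (congrFun (congrFun hg 1) 0) 0) 1
  have hv4 := congrFun (congrFun (congrFun (congrFun hg 1) 0) 1) 0
  have hv5 := congrFun (congrFun (congrFun (congrFun hg 1) 1) 0) 0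
  simp [bG, e, Fin.sum_univ_six, Matrix.vecHead, Matrix.vecTail] at hv0 hv1 hv2 hv3 hv4 hv5
  have hg0 : g 0 = 0 := by linarith [hv0]
  have hg1 : g 1 = 0 := by linarith [hv1]
  have hg2 : g 2 = 0 := by linarith [hv2]
  have hg3 : g 3 = 0 := by linarith [hv3]
  have hg4 : g 4 = 0 := by linarith [hv4]
  have hg5 : g 5 = 0 := by linarith [hv5]
  intro i; fin_cases i <;> assumption

noncomputable def bC0 : Fin 2 → Fin 2 → Fin 2 → Fin 2 → ℝ :=
  e 0 0 0 0 + e 0 0 0 1 + e 0 0 1 0 - e 0 0 1 1 - e 0 1 0 0 + e 0 1 0 1 - (2:ℝ) • e 0 1 1 1 - e 1 0 0 0 + e 1 0 1 0 - (2:ℝ) • e 1 0 1 1 + (3:ℝ) • e 1 1 0 0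

noncomputable def bC1 : Fin 2 → Fin 2 → Fin 2 → Fin 2 → ℝ :=
  (2:ℝ) • e 0 0 0 0 - e 0 0 0 1 - e 0 0 1 0 - (2:ℝ) • e 0 0 1 1 - (2:ℝ) • e 0 1 0 0 + (2:ℝ) • e 0 1 0 1 - e 0 1 1 1 - (2:ℝ) • e 1 0 0 0 + (2:ℝ) • e 1 0 1 0 - e 1 0 1 1 + (3:ℝ) • e 1 1 0 1 + (3:ℝ) • e 1 1 1 0

noncomputable def bC2 : Fin 2 → Fin 2 → Fin 2 → Fin 2 → ℝ :=
  (2:ℝ) • e 0 0 0 0 - e 0 0 0 1 - e 0 0 1 0 + e 0 0 1 1 + e 0 1 0 0 - (4:ℝ) • e 0 1 0 1 + (6:ℝ) • e 0 1 1 0 - e 0 1 1 1 + e 1 0 0 0 + (6:ℝ) • e 1 0 0 1 - (4:ℝ) • e 1 0 1 0 - e 1 0 1 1 + (3:ℝ) • e 1 1 1 1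

noncomputable def bC : Fin 3 → (Fin 2 → Fin 2 → Fin 2 → Fin 2 → ℝ) :=
  ![bC0, bC1, bC2]

set_option maxHeartbeats 1000000 in
lemma memC0 : bC0 ∈ S₁₉ (e 0 0 0 0 + e 0 0 1 1 + e 0 1 0 0 + e 0 1 0 1 + e 1 0 0 0
      + e 1 0 1 0 + e 1 1 1 1) := by
  refine ⟨?_, ?_, ?_, ?_⟩ <;> intro j k <;> fin_cases j <;> fin_cases k <;>
    · simp only [bC0, e, Pi.add_apply, Pi.sub_apply, Pi.smul_apply, smul_eq_mul,
        Fin.sum_univ_two]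
      norm_num

set_option maxHeartbeats 1000000 in
lemma memC1 : bC1 ∈ S₁₉ (e 0 0 0 0 + e 0 0 1 1 + e 0 1 0 0 + e 0 1 0 1 + e 1 0 0 0
      + e 1 0 1 0 + e 1 1 1 1) := by
  refine ⟨?_, ?_, ?_, ?_⟩ <;> intro j k <;> fin_cases j <;> fin_cases k <;>
    · simp only [bC1, e, Pi.add_apply, Pi.sub_apply, Pi.smul_apply, smul_eq_mul,
        Fin.sum_univ_two]
      norm_num

set_option maxHeartbeats 1000000 in
lemma memC2 : bC2 ∈ S₁₉ (e 0 0 0 0 + e 0 0 1 1 + e 0 1 0 0 + e 0 1 0 1 + e 1 0 0 0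
      + e 1 0 1 0 + e 1 1 1 1) := by
  refine ⟨?_, ?_, ?_, ?_⟩ <;> intro j k <;> fin_cases j <;> fin_cases k <;>
    · simp only [bC2, e, Pi.add_apply, Pi.sub_apply, Pi.smul_apply, smul_eq_mul,
        Fin.sum_univ_two]
      norm_num

set_option maxHeartbeats 2000000 in
lemma spanC : S₁₉ (e 0 0 0 0 + e 0 0 1 1 + e 0 1 0 0 + e 0 1 0 1 + e 1 0 0 0
      + e 1 0 1 0 + e 1 1 1 1) = Submodule.span ℝ (Set.range bC) := by
  apply le_antisymm
  · intro w hw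
    obtain ⟨h1, h2, h3, h4⟩ := hw
    have q100 := h1 0 0
    have q101 := h1 0 1
    have q110 := h1 1 0
    have q111 := h1 1 1
    have q200 := h2 0 0
    have q201 := h2 0 1
    have q210 := h2 1 0
    have q211 := h2 1 1
    have q300 := h3 0 0
    have q301 := h3 0 1
    have q310 := h3 1 0
    have q311 := h3 1 1
    have q400 := h4 0 0
    have q401 := h4 0 1
    have q410 := h4 1 0
    have q411 := h4 1 1
    simp only [e, Pi.add_apply, Fin.sum_univ_two] at q100 q101 q110 q111 q200 q201 q210 q211 q300 q301 q310 q311 q400 q401 q410 q411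
    norm_num at q100 q101 q110 q111 q200 q201 q210 q211 q300 q301 q310 q311 q400 q401 q410 q411
    rw [Submodule.mem_span_range_iff_exists_fun]
    refine ⟨![w 1 1 0 0 / 3, w 1 1 1 0 / 3, w 1 1 1 1 / 3], ?_⟩
    funext i₁ i₂ i₃ i₄
    fin_cases i₁ <;> fin_cases i₂ <;> fin_cases i₃ <;> fin_cases i₄ <;>
      simp [bC, bC0, bC1, bC2, e, Fin.sum_univ_three, Matrix.vecHead, Matrix.vecTail] <;>
      linarith [q100, q101, q110, q111, q200, q201, q210, q211, q300, q301, q310, q311, q400, q401, q410, q411]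
  · rw [Submodule.span_le]
    rintro x ⟨i, rfl⟩
    fin_cases i
    exacts [memC0, memC1, memC2]

set_option maxHeartbeats 2000000 in
lemma indepC : LinearIndependent ℝ bC := by
  rw [Fintype.linearIndependent_iff]
  intro g hg
  have hv0 := congrFun (congrFun (congrFun (congrFun hg 1) 1) 0) 0
  have hv1 := congrFun (congrFun (congrFun (congrFun hg 1) 1) 0) 1
  have hv2 := congrFun (congrFun (congrFun (congrFun hg 1) 1) 1) 1
  simp [bC, bC0, bC1, bC2, e, Fin.sum_univ_three, Matrix.vecHead, Matrix.vecTail] at hv0 hv1 hv2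
  have hg0 : g 0 = 0 := by linarith [hv0]
  have hg1 : g 1 = 0 := by linarith [hv1]
  have hg2 : g 2 = 0 := by linarith [hv2]
  intro i; fin_cases i <;> assumption

/-- **Values of `ñ₁₉` on the four-qubit GHZ state and the `C₈₂`
representative.**  For `u = [1,1,1,1] + [2,2,2,2]` one has `ñ₁₉(u) = 6`, and
for `u' = [1,1,1,1] + [1,1,2,2] + [1,2,1,1] + [1,2,1,2] + [2,1,1,1]
+ [2,1,2,1] + [2,2,2,2]` one has `ñ₁₉(u') = 3`. -/
theorem four_qubit_n19_values :
    n₁₉ (e 0 0 0 0 + e 1 1 1 1) = 6 ∧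
    n₁₉ (e 0 0 0 0 + e 0 0 1 1 + e 0 1 0 0 + e 0 1 0 1 + e 1 0 0 0
      + e 1 0 1 0 + e 1 1 1 1) = 3 := by
  constructor
  · rw [n₁₉, spanG, finrank_span_eq_card indepG]; simp
  · rw [n₁₉, spanC, finrank_span_eq_card indepC]; simp
end

section
/- The four-qubit GHZ state u = [1,1,1,1] + [2,2,2,2] and the cluster-type state u' = [1,1,1,1] + [1,1,2,2] + [1,2,1,1] + [1,2,1,2] + [2,1,1,1] + [2,1,2,1] + [2,2,2,2] lie in distinct orbits of GL₂(ℝ)⁴: there is no quadruple of invertible 2×2 real matrices (g₁, g₂, g₃, g₄) with g·u = u'. -/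
/-- Action of a quadruple of matrices on a four-qubit coordinate array:
`(g·v) j₁ j₂ j₃ j₄ = ∑ k₁ k₂ k₃ k₄,
  v k₁ k₂ k₃ k₄ * g₁ k₁ j₁ * g₂ k₂ j₂ * g₃ k₃ j₃ * g₄ k₄ j₄`. -/
def act₄ (g₁ g₂ g₃ g₄ : Matrix (Fin 2) (Fin 2) ℝ)
    (v : Fin 2 → Fin 2 → Fin 2 → Fin 2 → ℝ) :
    Fin 2 → Fin 2 → Fin 2 → Fin 2 → ℝ :=
  fun j₁ j₂ j₃ j₄ => ∑ k₁, ∑ k₂, ∑ k₃, ∑ k₄,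
    v k₁ k₂ k₃ k₄ * g₁ k₁ j₁ * g₂ k₂ j₂ * g₃ k₃ j₃ * g₄ k₄ j₄

/-- **The four-qubit GHZ state and the cluster-type state `C₈₂` are
inequivalent** under `GL₂(ℝ)⁴`: no quadruple of invertible `2×2` real
matrices carries `[1,1,1,1] + [2,2,2,2]` to
`[1,1,1,1] + [1,1,2,2] + [1,2,1,1] + [1,2,1,2] + [2,1,1,1] + [2,1,2,1]
+ [2,2,2,2]`. -/
theorem ghz_not_equivalent_to_cluster :
    ¬ ∃ g₁ g₂ g₃ g₄ : Matrix.GeneralLinearGroup (Fin 2) ℝ,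
        act₄ (g₁ : Matrix (Fin 2) (Fin 2) ℝ) (g₂ : Matrix (Fin 2) (Fin 2) ℝ)
          (g₃ : Matrix (Fin 2) (Fin 2) ℝ) (g₄ : Matrix (Fin 2) (Fin 2) ℝ)
          (e 0 0 0 0 + e 1 1 1 1)
        = e 0 0 0 0 + e 0 0 1 1 + e 0 1 0 0 + e 0 1 0 1 + e 1 0 0 0
          + e 1 0 1 0 + e 1 1 1 1 := by
  rintro ⟨g₁, g₂, g₃, g₄, h⟩
  have h11 := congrFun (congrFun (congrFun (congrFun h 0) 1) 0) 1
  simp [act₄, e, Fin.sum_univ_two] at h11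
  have h12 := congrFun (congrFun (congrFun (congrFun h 0) 1) 1) 0
  simp [act₄, e, Fin.sum_univ_two] at h12
  have h13 := congrFun (congrFun (congrFun (congrFun h 0) 1) 1) 1
  simp [act₄, e, Fin.sum_univ_two] at h13
  have h21 := congrFun (congrFun (congrFun (congrFun h 1) 0) 0) 1
  simp [act₄, e, Fin.sum_univ_two] at h21
  have h22 := congrFun (congrFun (congrFun (congrFun h 1) 0) 1) 0
  simp [act₄, e, Fin.sum_univ_two] at h22
  have h23 := congrFun (congrFun (congrFun (congrFun h 1) 0) 1) 1
  simp [act₄, e, Fin.sum_univ_two] at h23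
  have h31 := congrFun (congrFun (congrFun (congrFun h 1) 1) 0) 1
  simp [act₄, e, Fin.sum_univ_two] at h31
  have h32 := congrFun (congrFun (congrFun (congrFun h 1) 1) 1) 0
  simp [act₄, e, Fin.sum_univ_two] at h32
  have h33 := congrFun (congrFun (congrFun (congrFun h 1) 1) 1) 1
  simp [act₄, e, Fin.sum_univ_two] at h33
  have key : (g₁ 0 0 * g₂ 0 1 * g₃ 0 0 * g₄ 0 1 + g₁ 1 0 * g₂ 1 1 * g₃ 1 0 * g₄ 1 1) * ((g₁ 0 1 * g₂ 0 0 * g₃ 0 1 * g₄ 0 0 + g₁ 1 1 * g₂ 1 0 * g₃ 1 1 * g₄ 1 0) * (g₁ 0 1 * g₂ 0 1 * g₃ 0 1 * g₄ 0 1 + g₁ 1 1 * g₂ 1 1 * g₃ 1 1 * g₄ 1 1) - (g₁ 0 1 * g₂ 0 0 * g₃ 0 1 * g₄ 0 1 + g₁ 1 1 * g₂ 1 0 * g₃ 1 1 * g₄ 1 1) * (g₁ 0 1 * g₂ 0 1 * g₃ 0 1 * g₄ 0 0 + g₁ 1 1 * g₂ 1 1 * g₃ 1 1 * g₄ 1 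0))
      - (g₁ 0 0 * g₂ 0 1 * g₃ 0 1 * g₄ 0 0 + g₁ 1 0 * g₂ 1 1 * g₃ 1 1 * g₄ 1 0) * ((g₁ 0 1 * g₂ 0 0 * g₃ 0 0 * g₄ 0 1 + g₁ 1 1 * g₂ 1 0 * g₃ 1 0 * g₄ 1 1) * (g₁ 0 1 * g₂ 0 1 * g₃ 0 1 * g₄ 0 1 + g₁ 1 1 * g₂ 1 1 * g₃ 1 1 * g₄ 1 1) - (g₁ 0 1 * g₂ 0 0 * g₃ 0 1 * g₄ 0 1 + g₁ 1 1 * g₂ 1 0 * g₃ 1 1 * g₄ 1 1) * (g₁ 0 1 * g₂ 0 1 * g₃ 0 0 * g₄ 0 1 + g₁ 1 1 * g₂ 1 1 * g₃ 1 0 * g₄ 1 1))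
      + (g₁ 0 0 * g₂ 0 1 * g₃ 0 1 * g₄ 0 1 + g₁ 1 0 * g₂ 1 1 * g₃ 1 1 * g₄ 1 1) * ((g₁ 0 1 * g₂ 0 0 * g₃ 0 0 * g₄ 0 1 + g₁ 1 1 * g₂ 1 0 * g₃ 1 0 * g₄ 1 1) * (g₁ 0 1 * g₂ 0 1 * g₃ 0 1 * g₄ 0 0 + g₁ 1 1 * g₂ 1 1 * g₃ 1 1 * g₄ 1 0) - (g₁ 0 1 * g₂ 0 0 * g₃ 0 1 * g₄ 0 0 + g₁ 1 1 * g₂ 1 0 * g₃ 1 1 * g₄ 1 0) * (g₁ 0 1 * g₂ 0 1 * g₃ 0 0 * g₄ 0 1 + g₁ 1 1 * g₂ 1 1 * g₃ 1 0 * g₄ 1 1)) = 0 := by ring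
  rw [h11, h12, h13, h21, h22, h23, h31, h32, h33] at key
  norm_num at key
end
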